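/- Stability of the single-scattering attenuation factor: Let n ≥ 2, R > 0, δ ≥ 0, and let a, ã : ℝⁿ × S^{n-1} → [0,∞) be bounded measurable functions such that |ã(y,ω) − a(y,ω)| ≤ δ / τ(y,ω) for every y with |y| ≤ R and every unit vector ω. Define, for |x'| = R, ⟨x',θ'⟩ ≤ 0, 0 ≤ t ≤ τ₊(x',θ'), and θ ∈ S^{n-1}, F_a(t,x',θ',θ) := exp(−∫₀^{τ₊(x'+tθ', θ)} a(x'+tθ'+sθ, θ) ds) · exp(−∫₀^{t} a(x'+sθ', θ') ds), and F_ã analogously. Then |F_a(t,x',θ',θ) − F_ã(t,x',θ',θ)| ≤ 2δ. -/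

import Mathlib

/-- Forward exit time of the ball of radius `R`. -/
noncomputable def tauP {n : ℕ} (R : ℝ) (x θ : EuclideanSpace ℝ (Fin n)) : ℝ :=
  -(inner ℝ x θ : ℝ) + Real.sqrt (R ^ 2 - ‖x‖ ^ 2 + (inner ℝ x θ : ℝ) ^ 2)

/-- Backward exit time of the ball of radius `R`. -/
noncomputable def tauM {n : ℕ} (R : ℝ) (x θ : EuclideanSpace ℝ (Fin n)) : ℝ :=
  tauP R x (-θ)

/-- Chord length (total travel time) through the ball of radius `R`. -/
noncomputable def tauC {n : ℕ} (R : ℝ) (x θ : EuclideanSpace ℝ (Fin n)) : ℝ :=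
  tauM R x θ + tauP R x θ

/-- The single-scattering attenuation factor along the broken path entering at
`x'` in direction `θ'`, scattering at `x' + tθ'` into direction `θ`. -/
noncomputable def Fatt {n : ℕ} (R : ℝ)
    (a : EuclideanSpace ℝ (Fin n) → EuclideanSpace ℝ (Fin n) → ℝ)
    (t : ℝ) (x' θ' θ : EuclideanSpace ℝ (Fin n)) : ℝ :=
  Real.exp (-(∫ s in (0 : ℝ)..(tauP R (x' + t • θ') θ), a (x' + t • θ' + s • θ) θ)) *
    Real.exp (-(∫ s in (0 : ℝ)..t, a (x' + s • θ') θ'))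

open MeasureTheory Set

variable {n : ℕ}

lemma inner_line (x θ : EuclideanSpace ℝ (Fin n)) (hθ : ‖θ‖ = 1) (s : ℝ) :
    (inner ℝ (x + s • θ) θ : ℝ) = (inner ℝ x θ : ℝ) + s := by
  rw [inner_add_left, real_inner_smul_left, real_inner_self_eq_norm_sq, hθ]
  ring

lemma norm_line_sq (x θ : EuclideanSpace ℝ (Fin n)) (hθ : ‖θ‖ = 1) (s : ℝ) :
    ‖x + s • θ‖ ^ 2 = ‖x‖ ^ 2 + 2 * s * (inner ℝ x θ : ℝ) + s ^ 2 := by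
  rw [norm_add_sq_real, real_inner_smul_right, norm_smul, hθ]
  simp [mul_pow, sq_abs]
  ring

lemma tauP_line (R : ℝ) (x θ : EuclideanSpace ℝ (Fin n)) (hθ : ‖θ‖ = 1) (s : ℝ) :
    tauP R (x + s • θ) θ = tauP R x θ - s := by
  unfold tauP
  rw [inner_line x θ hθ, norm_line_sq x θ hθ]
  have : R ^ 2 - (‖x‖ ^ 2 + 2 * s * (inner ℝ x θ : ℝ) + s ^ 2) + ((inner ℝ x θ : ℝ) + s) ^ 2
      = R ^ 2 - ‖x‖ ^ 2 + (inner ℝ x θ : ℝ) ^ 2 := by ring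
  rw [this]; ring

lemma tauC_line (R : ℝ) (x θ : EuclideanSpace ℝ (Fin n)) (hθ : ‖θ‖ = 1) (s : ℝ) :
    tauC R (x + s • θ) θ = tauC R x θ := by
  have hmθ : ‖(-θ : EuclideanSpace ℝ (Fin n))‖ = 1 := by simpa using hθ
  have h2 : tauP R (x + s • θ) (-θ) = tauP R x (-θ) + s := by
    have := tauP_line R x (-θ) hmθ (-s)
    simpa [neg_smul, smul_neg, sub_neg_eq_add] using this
  unfold tauC tauM
  rw [h2, tauP_line R x θ hθ s]; ring

lemma tauP_nonneg {R : ℝ} {x θ : EuclideanSpace ℝ (Fin n)} (hx : ‖x‖ ≤ R) :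
    0 ≤ tauP R x θ := by
  unfold tauP
  have h1 : (inner ℝ x θ : ℝ) ^ 2 ≤ R ^ 2 - ‖x‖ ^ 2 + (inner ℝ x θ : ℝ) ^ 2 := by
    nlinarith [norm_nonneg x]
  have h2 : |(inner ℝ x θ : ℝ)| ≤ Real.sqrt (R ^ 2 - ‖x‖ ^ 2 + (inner ℝ x θ : ℝ) ^ 2) := by
    rw [← Real.sqrt_sq_eq_abs]; exact Real.sqrt_le_sqrt h1
  have := le_abs_self (inner ℝ x θ : ℝ)
  linarith

lemma tauM_nonneg {R : ℝ} {x θ : EuclideanSpace ℝ (Fin n)} (hx : ‖x‖ ≤ R) :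
    0 ≤ tauM R x θ := tauP_nonneg hx

lemma norm_line_le {R : ℝ} {x θ : EuclideanSpace ℝ (Fin n)} (hθ : ‖θ‖ = 1)
    (hx : ‖x‖ ≤ R) (hR : 0 ≤ R) {s : ℝ} (hs0 : 0 ≤ s) (hs1 : s ≤ tauP R x θ) :
    ‖x + s • θ‖ ≤ R := by
  set p : ℝ := (inner ℝ x θ : ℝ) with hp
  set D : ℝ := R ^ 2 - ‖x‖ ^ 2 + p ^ 2 with hDdef
  have hD : p ^ 2 ≤ D := by
    rw [hDdef]; nlinarith [norm_nonneg x, hx, hR]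
  have hD0 : 0 ≤ D := le_trans (sq_nonneg p) hD
  have hsq : Real.sqrt D ^ 2 = D := Real.sq_sqrt hD0
  have habs : |s + p| ≤ Real.sqrt D := by
    rcases le_or_gt 0 (s + p) with h | h
    · rw [abs_of_nonneg h]
      have h1 : s ≤ -p + Real.sqrt D := hs1
      linarith
    · rw [abs_of_neg h]
      have h1 : |p| ≤ Real.sqrt D := by
        rw [← Real.sqrt_sq_eq_abs]; exact Real.sqrt_le_sqrt hD
      have := neg_abs_le p
      linarith
  have h2 : (s + p) ^ 2 ≤ D := by
    calc (s + p) ^ 2 = |s + p| ^ 2 := (sq_abs _).symm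
    _ ≤ Real.sqrt D ^ 2 := pow_le_pow_left₀ (abs_nonneg _) habs 2
    _ = D := hsq
  have h3 : ‖x + s • θ‖ ^ 2 ≤ R ^ 2 := by
    rw [norm_line_sq x θ hθ s]
    rw [hDdef] at h2
    nlinarith
  nlinarith [norm_nonneg (x + s • θ)]

lemma exp_neg_lip {u v : ℝ} (hu : 0 ≤ u) (hv : 0 ≤ v) :
    |Real.exp (-u) - Real.exp (-v)| ≤ |u - v| := by
  have key : ∀ a b : ℝ, 0 ≤ a → a ≤ b → Real.exp (-a) - Real.exp (-b) ≤ b - a := by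
    intro a b ha hab
    have h1 : Real.exp (-a) ≤ 1 := Real.exp_le_one_iff.2 (by linarith)
    have h2 : 1 - Real.exp (-(b - a)) ≤ b - a := by
      have := Real.add_one_le_exp (-(b - a))
      linarith
    have h3 : Real.exp (-a) - Real.exp (-b) = Real.exp (-a) * (1 - Real.exp (-(b - a))) := by
      rw [mul_sub, mul_one, ← Real.exp_add]; ring_nf
    have h4 : 0 ≤ 1 - Real.exp (-(b - a)) := by
      have := Real.exp_le_one_iff.2 (show -(b-a) ≤ 0 by linarith)
      linarith
    rw [h3]
    nlinarith
  rw [abs_sub_le_iff]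
  rcases le_total u v with h | h
  · have k := key u v hu h
    have hm : Real.exp (-v) ≤ Real.exp (-u) := Real.exp_le_exp.2 (by linarith)
    have habs : v - u ≤ |u - v| := by rw [abs_sub_comm]; exact le_abs_self _
    constructor <;> linarith
  · have k := key v u hv h
    have hm : Real.exp (-u) ≤ Real.exp (-v) := Real.exp_le_exp.2 (by linarith)
    have habs : u - v ≤ |u - v| := le_abs_self _
    constructor <;> linarith

lemma ii_of_bounded {f : ℝ → ℝ} (hf : Measurable f) {M : ℝ} (hM : ∀ s, |f s| ≤ M)
    (T : ℝ) : IntervalIntegrable f volume 0 T := by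
  have hc : IntervalIntegrable (fun _ : ℝ => M) volume 0 T := intervalIntegrable_const
  exact hc.mono_fun hf.aestronglyMeasurable.restrict
    (ae_of_all _ fun s => by simpa using le_trans (hM s) (le_abs_self M))

lemma integral_diff_bound {f g : ℝ → ℝ} {T c : ℝ} (hT : 0 ≤ T)
    (hf : IntervalIntegrable f volume 0 T) (hg : IntervalIntegrable g volume 0 T)
    (h : ∀ s ∈ Set.Icc (0:ℝ) T, |g s - f s| ≤ c) :
    |(∫ s in (0:ℝ)..T, g s) - ∫ s in (0:ℝ)..T, f s| ≤ c * T := by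
  rw [← intervalIntegral.integral_sub hg hf]
  have key := intervalIntegral.norm_integral_le_of_norm_le_const
    (f := fun s => g s - f s) (a := 0) (b := T) (C := c) ?_
  · simpa [abs_of_nonneg hT] using key
  · intro s hs
    rw [Set.uIoc_of_le hT] at hs
    exact h s ⟨hs.1.le, hs.2⟩

/-- Stability of the single-scattering attenuation factor. -/
theorem single_scattering_stability {n : ℕ} (hn : 2 ≤ n) (R δ : ℝ)
    (hR : 0 < R) (hδ : 0 ≤ δ)
    (a a' : EuclideanSpace ℝ (Fin n) → EuclideanSpace ℝ (Fin n) → ℝ)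
    (ha0 : ∀ y ω, 0 ≤ a y ω) (ha0' : ∀ y ω, 0 ≤ a' y ω)
    (habd : ∃ M, ∀ y ω, a y ω ≤ M) (habd' : ∃ M, ∀ y ω, a' y ω ≤ M)
    (hameas : Measurable (Function.uncurry a))
    (hameas' : Measurable (Function.uncurry a'))
    (hclose : ∀ y ω : EuclideanSpace ℝ (Fin n), ‖y‖ ≤ R → ‖ω‖ = 1 →
      |a' y ω - a y ω| ≤ δ / tauC R y ω) :
    ∀ (x' θ' θ : EuclideanSpace ℝ (Fin n)) (t : ℝ),
      ‖x'‖ = R → ‖θ'‖ = 1 → (inner ℝ x' θ' : ℝ) ≤ 0 →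
      0 ≤ t → t ≤ tauP R x' θ' → ‖θ‖ = 1 →
      |Fatt R a t x' θ' θ - Fatt R a' t x' θ' θ| ≤ 2 * δ := by
  intro x' θ' θ t hx' hθ' hip ht0 ht1 hθ
  obtain ⟨M, hM⟩ := habd
  obtain ⟨M', hM'⟩ := habd'
  set x : EuclideanSpace ℝ (Fin n) := x' + t • θ' with hxdef
  have hx'R : ‖x'‖ ≤ R := le_of_eq hx'
  have hxR : ‖x‖ ≤ R := norm_line_le hθ' hx'R hR.le ht0 ht1
  set T : ℝ := tauP R x θ with hTdef
  have hT0 : 0 ≤ T := tauP_nonneg hxR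
  -- measurability of the four 1d functions
  have hcont1 : Continuous (fun s : ℝ => (x + s • θ, θ)) :=
    ((continuous_const.add (continuous_id.smul continuous_const)).prodMk continuous_const)
  have hcont2 : Continuous (fun s : ℝ => (x' + s • θ', θ')) :=
    ((continuous_const.add (continuous_id.smul continuous_const)).prodMk continuous_const)
  have hf1 : Measurable (fun s : ℝ => a (x + s • θ) θ) := hameas.comp hcont1.measurable
  have hf1' : Measurable (fun s : ℝ => a' (x + s • θ) θ) := hameas'.comp hcont1.measurable
  have hf2 : Measurable (fun s : ℝ => a (x' + s • θ') θ') := hameas.comp hcont2.measurable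
  have hf2' : Measurable (fun s : ℝ => a' (x' + s • θ') θ') := hameas'.comp hcont2.measurable
  have habs : ∀ y ω, |a y ω| ≤ M := fun y ω => by rw [abs_of_nonneg (ha0 y ω)]; exact hM y ω
  have habs' : ∀ y ω, |a' y ω| ≤ M' := fun y ω => by
    rw [abs_of_nonneg (ha0' y ω)]; exact hM' y ω
  have iA : IntervalIntegrable (fun s : ℝ => a (x + s • θ) θ) MeasureTheory.volume 0 T :=
    ii_of_bounded hf1 (fun s => habs _ _) T
  have iA' : IntervalIntegrable (fun s : ℝ => a' (x + s • θ) θ) MeasureTheory.volume 0 T :=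
    ii_of_bounded hf1' (fun s => habs' _ _) T
  have iB : IntervalIntegrable (fun s : ℝ => a (x' + s • θ') θ') MeasureTheory.volume 0 t :=
    ii_of_bounded hf2 (fun s => habs _ _) t
  have iB' : IntervalIntegrable (fun s : ℝ => a' (x' + s • θ') θ') MeasureTheory.volume 0 t :=
    ii_of_bounded hf2' (fun s => habs' _ _) t
  set A : ℝ := ∫ s in (0:ℝ)..T, a (x + s • θ) θ with hAdef
  set A' : ℝ := ∫ s in (0:ℝ)..T, a' (x + s • θ) θ with hA'def
  set B : ℝ := ∫ s in (0:ℝ)..t, a (x' + s • θ') θ' with hBdef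
  set B' : ℝ := ∫ s in (0:ℝ)..t, a' (x' + s • θ') θ' with hB'def
  have hA0 : 0 ≤ A := intervalIntegral.integral_nonneg hT0 fun u _ => ha0 _ _
  have hA0' : 0 ≤ A' := intervalIntegral.integral_nonneg hT0 fun u _ => ha0' _ _
  have hB0 : 0 ≤ B := intervalIntegral.integral_nonneg ht0 fun u _ => ha0 _ _
  have hB0' : 0 ≤ B' := intervalIntegral.integral_nonneg ht0 fun u _ => ha0' _ _
  -- generic bound: c/τ * L ≤ c when 0 ≤ L ≤ τ
  have hkey : ∀ τ L : ℝ, 0 ≤ L → L ≤ τ → δ / τ * L ≤ δ := by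
    intro τ L hL0 hLτ
    rcases eq_or_lt_of_le (le_trans hL0 hLτ) with h | h
    · have hL : L = 0 := le_antisymm (h ▸ hLτ) hL0
      simp [hL, hδ]
    · calc δ / τ * L ≤ δ / τ * τ :=
            mul_le_mul_of_nonneg_left hLτ (div_nonneg hδ (le_trans hL0 hLτ))
      _ = δ := div_mul_cancel₀ δ (ne_of_gt h)
  -- first leg bound
  have hAd : |A' - A| ≤ δ := by
    have hb := integral_diff_bound hT0 iA iA' (c := δ / tauC R x θ) (fun s hs => by
      have hy : ‖x + s • θ‖ ≤ R := norm_line_le hθ hxR hR.le hs.1 hs.2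
      have := hclose (x + s • θ) θ hy hθ
      rwa [tauC_line R x θ hθ s] at this)
    refine le_trans hb (hkey _ T hT0 ?_)
    have := tauM_nonneg (θ := θ) hxR
    unfold tauC
    linarith
  -- second leg bound
  have hBd : |B' - B| ≤ δ := by
    have hb := integral_diff_bound ht0 iB iB' (c := δ / tauC R x' θ') (fun s hs => by
      have hy : ‖x' + s • θ'‖ ≤ R :=
        norm_line_le hθ' hx'R hR.le hs.1 (le_trans hs.2 ht1)
      have := hclose (x' + s • θ') θ' hy hθ'
      rwa [tauC_line R x' θ' hθ' s] at this)
    refine le_trans hb (hkey _ t ht0 ?_)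
    have h1 := tauM_nonneg (θ := θ') hx'R
    have h2 : t ≤ tauP R x' θ' := ht1
    unfold tauC
    linarith
  -- assemble
  have hFa : Fatt R a t x' θ' θ = Real.exp (-(A + B)) := by
    unfold Fatt
    rw [← Real.exp_add, ← hxdef, ← hTdef, ← hAdef, ← hBdef]
    congr 1; ring
  have hFa' : Fatt R a' t x' θ' θ = Real.exp (-(A' + B')) := by
    unfold Fatt
    rw [← Real.exp_add, ← hxdef, ← hTdef, ← hA'def, ← hB'def]
    congr 1; ring
  rw [hFa, hFa']
  calc |Real.exp (-(A + B)) - Real.exp (-(A' + B'))| ≤ |(A + B) - (A' + B')| :=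
        exp_neg_lip (add_nonneg hA0 hB0) (add_nonneg hA0' hB0')
  _ = |(A - A') + (B - B')| := by ring_nf
  _ ≤ |A - A'| + |B - B'| := abs_add_le _ _
  _ ≤ δ + δ := add_le_add (abs_sub_comm A A' ▸ hAd) (abs_sub_comm B B' ▸ hBd)
  _ = 2 * δ := by ring
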